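/- arXiv:1602.05890 — 4 statements merged into one kernel-verified Lean document; each statement's English description precedes it below -/
import Mathlib

section
/- Let G be a finite connected simple graph on vertex set [n]. Two vertices i and j belong to the same connected component of the linear relation graph Γ_G of the edge ideal I_G if and only if there is a walk of even length in G connecting i and j. -/
open MvPolynomial

/-- The edge ideal of a finite simple graph on `Fin n`: the ideal generated by the
monomials `X i * X j` with `{i,j}` an edge of `G`. -/
noncomputable def edgeIdeal (K : Type*) [Field K] {n : ℕ} (G : SimpleGraph (Fin n)) :
    Ideal (MvPolynomial (Fin n) K) :=
  Ideal.span {p | ∃ i j : Fin n, G.Adj i j ∧ p = X i * X j}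

/-- The graded maximal ideal `(x_1, …, x_n)` of the polynomial ring. -/
noncomputable def maxIdeal (K : Type*) [Field K] (n : ℕ) : Ideal (MvPolynomial (Fin n) K) :=
  Ideal.span (Set.range X)

/-- The depth of `S/I` with respect to the graded maximal ideal: the supremum of the
lengths of regular sequences on `S/I` consisting of elements of the maximal ideal. -/
noncomputable def quotDepth (K : Type*) [Field K] {n : ℕ}
    (I : Ideal (MvPolynomial (Fin n) K)) : ℕ :=
  sSup {k | ∃ rs : List (MvPolynomial (Fin n) K), rs.length = k ∧
    (∀ r ∈ rs, r ∈ maxIdeal K n) ∧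
    RingTheory.Sequence.IsRegular (MvPolynomial (Fin n) K ⧸ I) rs}

/-- `dstab I`: the smallest power from which on the depth of `S/I^k` stabilizes. -/
noncomputable def dstab (K : Type*) [Field K] {n : ℕ}
    (I : Ideal (MvPolynomial (Fin n) K)) : ℕ :=
  sInf {k | 1 ≤ k ∧ ∀ l, k ≤ l → quotDepth K (I ^ l) = quotDepth K (I ^ k)}

/-- `astab I`: the smallest power from which on the set of associated primes of
`S/I^k` stabilizes. -/
noncomputable def astab (K : Type*) [Field K] {n : ℕ}
    (I : Ideal (MvPolynomial (Fin n) K)) : ℕ :=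
  sInf {k | 1 ≤ k ∧ ∀ l, k ≤ l →
    associatedPrimes (MvPolynomial (Fin n) K) (MvPolynomial (Fin n) K ⧸ (I ^ l)) =
    associatedPrimes (MvPolynomial (Fin n) K) (MvPolynomial (Fin n) K ⧸ (I ^ k))}

/-- The analytic spread `ℓ(I)`: the Krull dimension of `R(I)/m R(I)`, where `R(I)` is
the Rees algebra of `I` and `m` the graded maximal ideal. -/
noncomputable def analyticSpread (K : Type*) [Field K] {n : ℕ}
    (I : Ideal (MvPolynomial (Fin n) K)) : WithBot (WithTop ℕ) :=
  ringKrullDim ((reesAlgebra I) ⧸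
    (Ideal.map (algebraMap (MvPolynomial (Fin n) K) (reesAlgebra I)) (maxIdeal K n)))

/-- The set of minimal monomial generators of a monomial ideal: the (monic) monomials
belonging to `I` but not to `m·I`. -/
def minimalMonGens (K : Type*) [Field K] {n : ℕ}
    (I : Ideal (MvPolynomial (Fin n) K)) : Set (MvPolynomial (Fin n) K) :=
  {u | (∃ s : Fin n →₀ ℕ, u = monomial s 1) ∧ u ∈ I ∧ u ∉ maxIdeal K n * I}

/-- The linear relation graph `Γ` of a monomial ideal `I`: the vertices `i` and `j`
are adjacent iff there are minimal monomial generators `u, v` of `I` with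
`x_i u = x_j v`. -/
noncomputable def linearRelationGraph (K : Type*) [Field K] {n : ℕ}
    (I : Ideal (MvPolynomial (Fin n) K)) : SimpleGraph (Fin n) where
  Adj i j := i ≠ j ∧ ∃ u ∈ minimalMonGens K I, ∃ v ∈ minimalMonGens K I,
    X i * u = X j * v
  symm := ⟨fun i j ⟨hij, u, hu, v, hv, h⟩ => ⟨hij.symm, v, hv, u, hu, h.symm⟩⟩
  loopless := ⟨fun i ⟨h, _⟩ => h rfl⟩

/-- A star graph: one vertex (the center) is adjacent to all other vertices and
there are no other edges. -/
def IsStarGraph {n : ℕ} (G : SimpleGraph (Fin n)) : Prop :=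
  ∃ c : Fin n, ∀ i j : Fin n, G.Adj i j ↔ (i = c ∧ j ≠ c) ∨ (j = c ∧ i ≠ c)


section AuxProof

open Finsupp

variable {K : Type*} [Field K] {n : ℕ} (G : SimpleGraph (Fin n))

private lemma XX_eq (a b : Fin n) :
    (X a * X b : MvPolynomial (Fin n) K) = monomial (single a 1 + single b 1) 1 := by
  rw [X, X, monomial_mul, one_mul]

private lemma degsum_add (s t : Fin n →₀ ℕ) :
    (s + t).sum (fun _ e => e) = s.sum (fun _ e => e) + t.sum (fun _ e => e) :=
  Finsupp.sum_add_index' (fun _ => rfl) (fun _ _ _ => rfl)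

private lemma degsum_single (a : Fin n) (k : ℕ) :
    (single a k).sum (fun _ e => e) = k :=
  Finsupp.sum_single_index rfl

private lemma single_apply_ne {x y : Fin n} (h : x ≠ y) : (single x (1 : ℕ)) y = 0 := by
  simp [Finsupp.single_apply, h]

private lemma single_apply_self (x : Fin n) : (single x (1 : ℕ)) x = 1 := by simp

private lemma mem_edgeIdeal_coeff {p : MvPolynomial (Fin n) K} (hp : p ∈ edgeIdeal K G) :
    ∀ s, coeff s p ≠ 0 → ∃ a b, G.Adj a b ∧ single a 1 + single b 1 ≤ s := by
  refine Submodule.span_induction (fun x hx s hs => ?_) (fun s hs => by simp at hs)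
    (fun x y hx hy ihx ihy s hs => ?_) (fun r x hx ih s hs => ?_) hp
  · obtain ⟨a, b, hab, rfl⟩ := hx
    rw [XX_eq, coeff_monomial] at hs
    split at hs
    · exact ⟨a, b, hab, le_of_eq (by assumption)⟩
    · simp at hs
  · rw [coeff_add] at hs
    by_cases h : coeff s x = 0
    · exact ihy s (by rw [h, zero_add] at hs; exact hs)
    · exact ihx s h
  · rw [smul_eq_mul] at hs
    have hsup : s ∈ (r * x).support := MvPolynomial.mem_support_iff.mpr hs
    obtain ⟨y, hy, z, hz, hyz⟩ := Finset.mem_add.mp (MvPolynomial.support_mul r x hsup)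
    obtain ⟨a, b, hab, hle⟩ := ih z (MvPolynomial.mem_support_iff.mp hz)
    exact ⟨a, b, hab, hle.trans (hyz ▸ self_le_add_left z y)⟩

private lemma mem_mI_deg {p : MvPolynomial (Fin n) K}
    (hp : p ∈ maxIdeal K n * edgeIdeal K G) :
    ∀ s, coeff s p ≠ 0 → 3 ≤ s.sum fun _ e => e := by
  rw [maxIdeal, edgeIdeal, Ideal.span_mul_span] at hp
  refine Submodule.span_induction (fun x hx s hs => ?_) (fun s hs => by simp at hs)
    (fun x y hx hy ihx ihy s hs => ?_) (fun r x hx ih s hs => ?_) hp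
  · simp only [Set.mem_mul, Set.mem_iUnion, Set.mem_range, Set.mem_singleton_iff] at hx
    obtain ⟨u, ⟨c, rfl⟩, v, ⟨a, b, hab, rfl⟩, rfl⟩ := hx
    rw [XX_eq, X, monomial_mul, one_mul, coeff_monomial] at hs
    split at hs
    · next h =>
      rw [← h, degsum_add, degsum_add, degsum_single, degsum_single, degsum_single]
    · simp at hs
  · rw [coeff_add] at hs
    by_cases h : coeff s x = 0
    · exact ihy s (by rw [h, zero_add] at hs; exact hs)
    · exact ihx s h
  · rw [smul_eq_mul] at hs
    have hsup : s ∈ (r * x).support := MvPolynomial.mem_support_iff.mpr hs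
    obtain ⟨y, hy, z, hz, hyz⟩ := Finset.mem_add.mp (MvPolynomial.support_mul r x hsup)
    have h3 := ih z (MvPolynomial.mem_support_iff.mp hz)
    rw [← hyz, degsum_add]
    omega

private lemma minGens_edgeIdeal :
    minimalMonGens K (edgeIdeal K G) = {u | ∃ a b, G.Adj a b ∧ u = X a * X b} := by
  ext u
  constructor
  · rintro ⟨⟨s, rfl⟩, hI, hm⟩
    have h1 : coeff s (monomial s (1 : K)) ≠ 0 := by simp [coeff_monomial]
    obtain ⟨a, b, hab, hle⟩ := mem_edgeIdeal_coeff G hI s h1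
    refine ⟨a, b, hab, ?_⟩
    obtain ⟨t, hst⟩ : ∃ t, s = single a 1 + single b 1 + t :=
      ⟨s - (single a 1 + single b 1), (add_tsub_cancel_of_le hle).symm⟩
    by_cases h0 : t = 0
    · rw [XX_eq, hst, h0, add_zero]
    · exfalso
      obtain ⟨c, hc⟩ : ∃ c, t c ≠ 0 := by
        by_contra h
        push_neg at h
        exact h0 (Finsupp.ext h)
      have hct : single c 1 ≤ t := Finsupp.single_le_iff.mpr (Nat.one_le_iff_ne_zero.mpr hc)
      obtain ⟨t', htt⟩ : ∃ t', t = single c 1 + t' :=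
        ⟨t - single c 1, (add_tsub_cancel_of_le hct).symm⟩
      apply hm
      have heq : monomial s (1 : K) = X c * (X a * X b * monomial t' 1) := by
        rw [XX_eq, X, monomial_mul, monomial_mul, one_mul, one_mul]
        congr 1
        rw [hst, htt]
        abel
      rw [heq]
      exact Ideal.mul_mem_mul (Ideal.subset_span ⟨c, rfl⟩)
        (Ideal.mul_mem_right _ _ (Ideal.subset_span ⟨a, b, hab, rfl⟩))
  · rintro ⟨a, b, hab, rfl⟩
    refine ⟨⟨single a 1 + single b 1, XX_eq a b⟩, Ideal.subset_span ⟨a, b, hab, rfl⟩,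
      fun hm => ?_⟩
    have h2 := mem_mI_deg G hm (single a 1 + single b 1)
      (by rw [XX_eq]; simp [coeff_monomial])
    rw [degsum_add, degsum_single, degsum_single] at h2
    omega

private lemma key_finsupp {i a b j c d : Fin n}
    (heq : single i 1 + single a 1 + single b 1
      = (single j 1 + single c 1 + single d 1 : Fin n →₀ ℕ))
    (hij : i ≠ j) :
    ∃ m, ((a = j ∧ m = b) ∨ (b = j ∧ m = a)) ∧ ((c = i ∧ m = d) ∨ (d = i ∧ m = c)) := by
  have hpt : ∀ x, (single i 1 : Fin n →₀ ℕ) x + (single a 1 : Fin n →₀ ℕ) x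
      + (single b 1 : Fin n →₀ ℕ) x
      = (single j 1 : Fin n →₀ ℕ) x + (single c 1 : Fin n →₀ ℕ) x
      + (single d 1 : Fin n →₀ ℕ) x := fun x => by
    have := DFunLike.congr_fun heq x
    simpa using this
  have haj : a = j ∨ b = j := by
    by_contra hcon
    push_neg at hcon
    have h := hpt j
    rw [single_apply_ne hij, single_apply_ne hcon.1, single_apply_ne hcon.2,
      single_apply_self] at h
    omega
  have main : ∀ a b : Fin n, a = j →
      (∀ x, (single i 1 : Fin n →₀ ℕ) x + (single a 1 : Fin n →₀ ℕ) x
        + (single b 1 : Fin n →₀ ℕ) x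
        = (single j 1 : Fin n →₀ ℕ) x + (single c 1 : Fin n →₀ ℕ) x
        + (single d 1 : Fin n →₀ ℕ) x) →
      ∃ m, m = b ∧ ((c = i ∧ m = d) ∨ (d = i ∧ m = c)) := by
    intro a b ha hpt'
    subst ha
    have h2 : ∀ x, (single i 1 : Fin n →₀ ℕ) x + (single b 1 : Fin n →₀ ℕ) x
        = (single c 1 : Fin n →₀ ℕ) x + (single d 1 : Fin n →₀ ℕ) x := fun x => by
      have := hpt' x
      omega
    have hci : c = i ∨ d = i := by
      by_contra hcon
      push_neg at hcon
      have h := h2 i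
      rw [single_apply_self, single_apply_ne hcon.1, single_apply_ne hcon.2] at h
      omega
    rcases hci with hc | hd
    · subst hc
      have hdb : d = b := by
        by_contra hdb
        have h := h2 b
        rw [single_apply_self, single_apply_ne hdb] at h
        omega
      exact ⟨b, rfl, Or.inl ⟨rfl, hdb.symm⟩⟩
    · subst hd
      have hcb : c = b := by
        by_contra hcb
        have h := h2 b
        rw [single_apply_self, single_apply_ne hcb] at h
        omega
      exact ⟨b, rfl, Or.inr ⟨rfl, hcb.symm⟩⟩
  rcases haj with ha | hb
  · obtain ⟨m, hm, hr⟩ := main a b ha hpt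
    exact ⟨m, Or.inl ⟨ha, hm⟩, hr⟩
  · obtain ⟨m, hm, hr⟩ := main b a hb (fun x => by have := hpt x; omega)
    exact ⟨m, Or.inr ⟨hb, hm⟩, hr⟩

private lemma gamma_adj_iff (i j : Fin n) :
    (linearRelationGraph K (edgeIdeal K G)).Adj i j ↔
      i ≠ j ∧ ∃ m, G.Adj i m ∧ G.Adj j m := by
  constructor
  · rintro ⟨hij, u, hu, v, hv, h⟩
    rw [minGens_edgeIdeal] at hu hv
    obtain ⟨a, b, hab, rfl⟩ := hu
    obtain ⟨c, d, hcd, rfl⟩ := hv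
    rw [XX_eq, XX_eq, X, X, monomial_mul, monomial_mul, one_mul] at h
    have heq : single i 1 + single a 1 + single b 1
        = (single j 1 + single c 1 + single d 1 : Fin n →₀ ℕ) := by
      have := MvPolynomial.monomial_left_injective (one_ne_zero (α := K)) h
      rw [← add_assoc, ← add_assoc] at this
      exact this
    obtain ⟨m, hL, hR⟩ := key_finsupp heq hij
    refine ⟨hij, m, ?_, ?_⟩
    · rcases hR with ⟨rfl, rfl⟩ | ⟨rfl, rfl⟩
      · exact hcd
      · exact hcd.symm
    · rcases hL with ⟨rfl, rfl⟩ | ⟨rfl, rfl⟩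
      · exact hab
      · exact hab.symm
  · rintro ⟨hij, m, him, hjm⟩
    refine ⟨hij, X j * X m, ?_, X i * X m, ?_, by ring⟩
    · rw [minGens_edgeIdeal]
      exact ⟨j, m, hjm, rfl⟩
    · rw [minGens_edgeIdeal]
      exact ⟨i, m, him, rfl⟩

private lemma even_walk_of_reach {i j : Fin n}
    (h : (linearRelationGraph K (edgeIdeal K G)).Reachable i j) :
    ∃ w : G.Walk i j, Even w.length := by
  obtain ⟨p⟩ := h
  induction p with
  | nil => exact ⟨SimpleGraph.Walk.nil, by simp⟩
  | cons hadj p ih =>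
    obtain ⟨w, k, hk⟩ := ih
    obtain ⟨-, m, h1, h2⟩ := (gamma_adj_iff G _ _).mp hadj
    refine ⟨SimpleGraph.Walk.cons h1 (SimpleGraph.Walk.cons h2.symm w), k + 1, ?_⟩
    simp only [SimpleGraph.Walk.length_cons]
    omega

private lemma reach_of_even {j : Fin n} :
    ∀ (m : ℕ) (i : Fin n) (w : G.Walk i j), w.length = 2 * m →
      (linearRelationGraph K (edgeIdeal K G)).Reachable i j := by
  intro m
  induction m with
  | zero =>
    intro i w hw
    cases w with
    | nil => exact SimpleGraph.Reachable.refl _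
    | cons h p => simp [SimpleGraph.Walk.length_cons] at hw
  | succ m ih =>
    intro i w hw
    cases w with
    | nil => simp only [SimpleGraph.Walk.length_nil] at hw; omega
    | @cons _ x _ h1 p =>
      cases p with
      | nil => simp only [SimpleGraph.Walk.length_cons, SimpleGraph.Walk.length_nil] at hw; omega
      | @cons _ y _ h2 q =>
        have hr := ih y q (by simp only [SimpleGraph.Walk.length_cons] at hw; omega)
        by_cases hiy : i = y
        · exact hiy ▸ hr
        · exact (SimpleGraph.Adj.reachable
            ((gamma_adj_iff G i y).mpr ⟨hiy, x, h1, h2.symm⟩)).trans hr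

end AuxProof

/-- in a connected graph `G`, two vertices lie in the same connected
component of the linear relation graph of `I_G` iff there is a walk of even length
in `G` connecting them. -/
theorem stmt1 (K : Type*) [Field K] {n : ℕ} (G : SimpleGraph (Fin n))
    (hconn : G.Connected) (i j : Fin n) :
    (linearRelationGraph K (edgeIdeal K G)).Reachable i j ↔
      ∃ w : G.Walk i j, Even w.length := by
  constructor
  · intro h
    exact even_walk_of_reach G h
  · rintro ⟨w, m, hm⟩
    exact reach_of_even G m i w (by omega)
end

section
/- Let G be a finite connected simple graph on vertex set [n] which is non-bipartite. Then the linear relation graph Γ_G of the edge ideal I_G has exactly n vertices and is connected (i.e., has exactly 1 connected component). -/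
open MvPolynomial

namespace Stmt3Aux

open MvPolynomial Finsupp

/-! ### Algebra: degree-based lemmas identifying minimal monomial generators -/

variable {K : Type*} [Field K] {n : ℕ}

def degF (s : Fin n →₀ ℕ) : ℕ := s.sum fun _ e => e

lemma degF_add (s t : Fin n →₀ ℕ) : degF (s + t) = degF s + degF t :=
  Finsupp.sum_add_index' (fun _ => rfl) (fun _ _ _ => rfl)

lemma degF_single (i : Fin n) : degF (Finsupp.single i 1) = 1 := by
  simp [degF, Finsupp.sum_single_index]

/-- All coefficients of `p` in degrees `< k` vanish. -/
def LowZero (k : ℕ) (p : MvPolynomial (Fin n) K) : Prop :=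
  ∀ s : Fin n →₀ ℕ, degF s < k → coeff s p = 0

lemma LowZero.mul {a b : ℕ} {p q : MvPolynomial (Fin n) K}
    (hp : LowZero a p) (hq : LowZero b q) : LowZero (a + b) (p * q) := by
  classical
  intro s hs
  rw [coeff_mul]
  refine Finset.sum_eq_zero fun x hx => ?_
  rw [Finset.HasAntidiagonal.mem_antidiagonal] at hx
  by_cases h1 : degF x.1 < a
  · rw [hp _ h1, zero_mul]
  · have hdeg : degF x.1 + degF x.2 = degF s := by rw [← degF_add, hx]
    have h2 : degF x.2 < b := by omega
    rw [hq _ h2, mul_zero]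

def lowIdeal (K : Type*) [Field K] (n k : ℕ) : Ideal (MvPolynomial (Fin n) K) where
  carrier := {p | LowZero k p}
  add_mem' := fun hp hq s hs => by rw [coeff_add, hp s hs, hq s hs, add_zero]
  zero_mem' := fun s _ => coeff_zero s
  smul_mem' := fun r p hp => by
    have h0 : LowZero 0 r := fun s hs => absurd hs (Nat.not_lt_zero _)
    have := h0.mul hp
    simpa [smul_eq_mul] using this

lemma mem_lowIdeal {k : ℕ} {p : MvPolynomial (Fin n) K} :
    p ∈ lowIdeal K n k ↔ LowZero k p := Iff.rfl

lemma X_lowZero (i : Fin n) : LowZero 1 (X i : MvPolynomial (Fin n) K) := by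
  classical
  intro s hs
  rw [coeff_X']
  split
  · next h => rw [← h, degF_single] at hs; omega
  · rfl

lemma maxIdeal_le : maxIdeal K n ≤ lowIdeal K n 1 := by
  rw [maxIdeal, Ideal.span_le]
  rintro p ⟨i, rfl⟩
  exact X_lowZero i

lemma edgeIdeal_le (G : SimpleGraph (Fin n)) : edgeIdeal K G ≤ lowIdeal K n 2 := by
  rw [edgeIdeal, Ideal.span_le]
  rintro p ⟨i, j, _, rfl⟩
  exact (X_lowZero i).mul (X_lowZero j)

lemma mul_le_lowIdeal (G : SimpleGraph (Fin n)) :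
    maxIdeal K n * edgeIdeal K G ≤ lowIdeal K n 3 := by
  rw [Ideal.mul_le]
  intro r hr s hs
  exact (maxIdeal_le hr).mul (edgeIdeal_le G hs)

lemma XX_eq (i j : Fin n) : (X i * X j : MvPolynomial (Fin n) K) =
    monomial (Finsupp.single i 1 + Finsupp.single j 1) 1 := by
  rw [show (X i : MvPolynomial (Fin n) K) = monomial (Finsupp.single i 1) 1 from rfl,
    show (X j : MvPolynomial (Fin n) K) = monomial (Finsupp.single j 1) 1 from rfl,
    monomial_mul, one_mul]

lemma gen_mem (G : SimpleGraph (Fin n)) {i j : Fin n} (h : G.Adj i j) :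
    (X i * X j : MvPolynomial (Fin n) K) ∈ minimalMonGens K (edgeIdeal K G) := by
  classical
  refine ⟨⟨Finsupp.single i 1 + Finsupp.single j 1, XX_eq i j⟩,
    Ideal.subset_span ⟨i, j, h, rfl⟩, fun hmem => ?_⟩
  have h3 : LowZero 3 (X i * X j : MvPolynomial (Fin n) K) :=
    mem_lowIdeal.mp (mul_le_lowIdeal G hmem)
  have hdeg : degF (Finsupp.single i 1 + Finsupp.single j 1) < 3 := by
    rw [degF_add, degF_single, degF_single]; omega
  have hc := h3 _ hdeg
  rw [XX_eq, coeff_monomial, if_pos rfl] at hc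
  exact one_ne_zero hc

/-! ### Graph theory: the common-neighbor graph -/

variable {V : Type*}

/-- The common-neighbor graph of `G`. -/
def cng (G : SimpleGraph V) : SimpleGraph V where
  Adj i j := i ≠ j ∧ ∃ k, G.Adj i k ∧ G.Adj j k
  symm := ⟨fun i j ⟨h, k, h1, h2⟩ => ⟨h.symm, k, h2, h1⟩⟩
  loopless := ⟨fun i ⟨h, _⟩ => h rfl⟩

lemma reach_of_common (G : SimpleGraph V) {a c x : V} (h1 : G.Adj a x) (h2 : G.Adj c x) :
    (cng G).Reachable a c := by
  rcases eq_or_ne a c with rfl | h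
  · exact SimpleGraph.Reachable.refl _
  · exact SimpleGraph.Adj.reachable ⟨h, x, h1, h2⟩

lemma evenWalk (G : SimpleGraph V) : ∀ {a b : V} (w : G.Walk a b), Even w.length →
    (cng G).Reachable a b
  | _, _, SimpleGraph.Walk.nil, _ => SimpleGraph.Reachable.refl _
  | _, _, SimpleGraph.Walk.cons _ SimpleGraph.Walk.nil, he => by
    simp [Nat.even_iff] at he
  | _, _, SimpleGraph.Walk.cons h1 (SimpleGraph.Walk.cons h2 w'), he => by
    have he' : Even w'.length := by
      simp only [SimpleGraph.Walk.length_cons] at he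
      rw [Nat.even_iff] at he ⊢
      omega
    exact (reach_of_common G h1 h2.symm).trans (evenWalk G w' he')

lemma first_adj {H : SimpleGraph V} {i j : V} (h : H.Reachable i j) (hne : i ≠ j) :
    ∃ k, H.Adj i k := by
  obtain ⟨w⟩ := h
  cases w with
  | nil => exact absurd rfl hne
  | cons h _ => exact ⟨_, h⟩

end Stmt3Aux

open Stmt3Aux in
/-- if `G` is connected and non-bipartite, then the linear relation
graph of `I_G` has all `n` vertices and is connected. -/
theorem stmt3 (K : Type*) [Field K] {n : ℕ} (G : SimpleGraph (Fin n))
    (hconn : G.Connected) (hnb : ¬ G.Colorable 2) :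
    (linearRelationGraph K (edgeIdeal K G)).support = Set.univ ∧
    (linearRelationGraph K (edgeIdeal K G)).Connected := by
  classical
  have hle : cng G ≤ linearRelationGraph K (edgeIdeal K G) := by
    rintro i j ⟨hne, k, h1, h2⟩
    exact ⟨hne, X j * X k, gen_mem G h2, X i * X k, gen_mem G h1, by ring⟩
  -- there is at least one edge
  have hedge : ∃ u v : Fin n, G.Adj u v := by
    by_contra h
    push_neg at h
    exact hnb ⟨SimpleGraph.Coloring.mk (fun _ => 0) (fun {a b} hab => absurd hab (h a b))⟩
  obtain ⟨u0, v0, huv0⟩ := hedge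
  haveI : Nonempty (Fin n) := hconn.nonempty
  let r : Fin n := u0
  let wk : ∀ v : Fin n, G.Walk v r := fun v => (hconn v r).some
  -- a monochromatic edge for the parity coloring
  have himp : ∃ u v : Fin n, G.Adj u v ∧
      (((wk u).length : ZMod 2) = ((wk v).length : ZMod 2)) := by
    by_contra h
    push_neg at h
    have C : G.Coloring (ZMod 2) :=
      SimpleGraph.Coloring.mk (fun v => ((wk v).length : ZMod 2))
        (fun {a b} hab => h a b hab)
    have h2 := C.colorable
    rw [ZMod.card] at h2
    exact hnb h2
  obtain ⟨u, v, huv, hpar⟩ := himp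
  -- an odd closed walk at r
  let W : G.Walk r r := (wk u).reverse.append (SimpleGraph.Walk.cons huv (wk v))
  have hpar' : (wk u).length % 2 = (wk v).length % 2 :=
    (ZMod.natCast_eq_natCast_iff' _ _ _).mp hpar
  have hW : Odd W.length := by
    have hlen : W.length = (wk u).length + (1 + (wk v).length) := by
      simp [W, SimpleGraph.Walk.length_append, SimpleGraph.Walk.length_reverse,
        SimpleGraph.Walk.length_cons]; omega
    rw [hlen, Nat.odd_iff]
    omega
  have hreach : ∀ a : Fin n, (cng G).Reachable a r := by
    intro a
    rcases Nat.even_or_odd (wk a).length with he | ho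
    · exact evenWalk G (wk a) he
    · refine evenWalk G ((wk a).append W) ?_
      rw [SimpleGraph.Walk.length_append, Nat.even_iff]
      rw [Nat.odd_iff] at ho hW
      omega
  have hconn' : (cng G).Connected :=
    ⟨fun a b => (hreach a).trans (hreach b).symm⟩
  constructor
  · apply Set.eq_univ_of_forall
    intro i
    obtain ⟨j, hj⟩ : ∃ j : Fin n, j ≠ i := by
      rcases eq_or_ne u0 i with rfl | h
      · exact ⟨v0, (G.ne_of_adj huv0).symm⟩
      · exact ⟨u0, h⟩
    have hrij : (cng G).Reachable i j := (hreach i).trans (hreach j).symm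
    obtain ⟨k, hk⟩ := first_adj hrij hj.symm
    exact (SimpleGraph.mem_support _).mpr ⟨k, hle hk⟩
  · exact hconn'.mono hle
end

section
/- Let G be a finite connected simple graph on vertex set [n] which is non-bipartite, and let I_G ⊂ S = K[x_1,...,x_n] be its edge ideal. Then depth S/I_G^k = 0 for all k ≥ n-1. -/
open MvPolynomial

section Jdeg
variable (K : Type*) [Field K] {n : ℕ}

def fdeg {n : ℕ} (m : Fin n →₀ ℕ) : ℕ := m.sum fun _ e => e

lemma fdeg_add (a b : Fin n →₀ ℕ) : fdeg (a + b) = fdeg a + fdeg b := by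
  simp [fdeg, Finsupp.sum_add_index]

noncomputable def Jdeg (d : ℕ) : Ideal (MvPolynomial (Fin n) K) where
  carrier := {p | ∀ m ∈ p.support, d ≤ fdeg m}
  zero_mem' := by simp
  add_mem' := by
    intro p q hp hq m hm
    rcases Finset.mem_union.mp (MvPolynomial.support_add hm) with h | h
    · exact hp m h
    · exact hq m h
  smul_mem' := by
    intro r p hp m hm
    rw [smul_eq_mul] at hm
    obtain ⟨a, _, b, hb, hab⟩ := Finset.mem_add.mp (MvPolynomial.support_mul r p hm)
    calc d ≤ fdeg b := hp b hb
    _ ≤ fdeg a + fdeg b := Nat.le_add_left _ _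
    _ = fdeg m := by rw [← fdeg_add, hab]

lemma mem_Jdeg {d : ℕ} {p : MvPolynomial (Fin n) K} :
    p ∈ Jdeg K d ↔ ∀ m ∈ p.support, d ≤ fdeg m := Iff.rfl

lemma Jdeg_mul_le (a b : ℕ) : Jdeg K a * Jdeg K b ≤ (Jdeg K (a + b) : Ideal (MvPolynomial (Fin n) K)) := by
  rw [Ideal.mul_le]
  intro p hp q hq
  rw [mem_Jdeg]
  intro m hm
  obtain ⟨x, hx, y, hy, hxy⟩ := Finset.mem_add.mp (MvPolynomial.support_mul p q hm)
  have := Nat.add_le_add (hp x hx) (hq y hy)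
  rwa [← fdeg_add, hxy] at this

lemma edgeIdeal_le_Jdeg (G : SimpleGraph (Fin n)) : edgeIdeal K G ≤ Jdeg K 2 := by
  rw [edgeIdeal, Ideal.span_le]
  rintro p ⟨i, j, hij, rfl⟩
  rw [SetLike.mem_coe, mem_Jdeg]
  intro m hm
  obtain ⟨x, hx, y, hy, hxy⟩ := Finset.mem_add.mp (MvPolynomial.support_mul (X i) (X j) hm)
  rw [MvPolynomial.support_X, Finset.mem_singleton] at hx hy
  subst hx hy hxy
  rw [fdeg_add]
  simp [fdeg, Finsupp.sum_single_index]

lemma edgeIdeal_pow_le_Jdeg (G : SimpleGraph (Fin n)) (k : ℕ) :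
    edgeIdeal K G ^ k ≤ Jdeg K (2 * k) := by
  induction k with
  | zero =>
    rw [pow_zero]
    intro p _
    rw [mem_Jdeg]
    intro m _
    exact Nat.zero_le _
  | succ k ih =>
    rw [pow_succ, Nat.mul_succ]
    exact le_trans (Ideal.mul_mono ih (edgeIdeal_le_Jdeg K G)) (Jdeg_mul_le K _ _)

end Jdeg

section MonProd
open SimpleGraph
variable (K : Type*) [Field K] {n : ℕ} {G : SimpleGraph (Fin n)}

noncomputable def monProd : ∀ {u v : Fin n}, G.Walk u v → MvPolynomial (Fin n) K
  | _, _, SimpleGraph.Walk.nil => 1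
  | u, _, SimpleGraph.Walk.cons _ p => X u * monProd p

@[simp] lemma monProd_nil {u : Fin n} : monProd K (SimpleGraph.Walk.nil : G.Walk u u) = 1 := rfl

@[simp] lemma monProd_cons {u v w : Fin n} (h : G.Adj u v) (p : G.Walk v w) :
    monProd K (SimpleGraph.Walk.cons h p) = X u * monProd K p := rfl

lemma monProd_append {u v w : Fin n} (p : G.Walk u v) (q : G.Walk v w) :
    monProd K (p.append q) = monProd K p * monProd K q := by
  induction p with
  | nil => simp
  | cons h p ih => simp [Walk.cons_append, ih, mul_assoc]

lemma monProd_rotate [DecidableEq (Fin n)] {u v : Fin n} (c : G.Walk v v) (h : u ∈ c.support) :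
    monProd K (c.rotate u h) = monProd K c := by
  rw [SimpleGraph.Walk.rotate, monProd_append]
  conv_rhs => rw [← SimpleGraph.Walk.take_spec c h]
  rw [monProd_append, mul_comm]

lemma mem_edge (i j : Fin n) (hij : G.Adj i j) : X i * X j ∈ edgeIdeal K G :=
  Ideal.subset_span ⟨i, j, hij, rfl⟩

lemma monProd_mul_mem (j : ℕ) : ∀ {u v : Fin n} (p : G.Walk u v), p.length = 2 * j + 1 →
    monProd K p * X v ∈ edgeIdeal K G ^ (j + 1) := by
  induction j with
  | zero =>
    intro u v p hp
    cases p with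
    | nil => simp at hp
    | cons h q =>
      cases q with
      | nil =>
        rw [pow_one]
        simpa using mem_edge K _ _ h
      | cons h' r => simp [SimpleGraph.Walk.length_cons] at hp
  | succ j ih =>
    intro u v p hp
    cases p with
    | nil => simp at hp
    | @cons _ b _ h q =>
      cases q with
      | nil => simp at hp
      | @cons _ x _ h' r =>
        have hr : r.length = 2 * j + 1 := by
          simp only [SimpleGraph.Walk.length_cons] at hp
          omega
        have h1 : monProd K r * X v ∈ edgeIdeal K G ^ (j + 1) := ih r hr
        have h2 : X u * X b ∈ edgeIdeal K G := mem_edge K _ _ h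
        have : (X u * X b) * (monProd K r * X v) ∈ edgeIdeal K G ^ (j + 1 + 1) := by
          rw [pow_succ']
          exact Ideal.mul_mem_mul h2 h1
        convert this using 1
        simp only [monProd_cons]
        ring

lemma monProd_eq_monomial {u v : Fin n} (p : G.Walk u v) :
    ∃ e : Fin n →₀ ℕ, monProd K p = MvPolynomial.monomial e 1 ∧ fdeg e = p.length := by
  induction p with
  | nil => exact ⟨0, by simp, by simp [fdeg]⟩
  | @cons a b c h p ih =>
    obtain ⟨e, he, hd⟩ := ih
    refine ⟨Finsupp.single a 1 + e, ?_, ?_⟩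
    · rw [monProd_cons, he, MvPolynomial.X, MvPolynomial.monomial_mul, one_mul]
    · rw [fdeg_add, hd]
      simp [fdeg, Finsupp.sum_single_index, SimpleGraph.Walk.length_cons]
      omega

end MonProd

section Graph
open SimpleGraph
variable {n : ℕ} {G : SimpleGraph (Fin n)}

lemma exists_odd_closed_walk (hconn : G.Connected) (hnb : ¬ G.Colorable 2) :
    ∃ (u : Fin n) (W : G.Walk u u), Odd W.length := by
  by_contra hcon
  push_neg at hcon
  apply hnb
  have : Nonempty (Fin n) := hconn.nonempty
  obtain ⟨b⟩ := this
  classical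
  have hreach : ∀ v, G.Reachable b v := fun v => hconn.preconnected b v
  let f : Fin n → Bool := fun v => decide (Odd (hreach v).some.length)
  have valid : ∀ {u v : Fin n}, G.Adj u v → f u ≠ f v := by
    intro u v huv hf
    set p := (hreach u).some
    set q := (hreach v).some
    have hclosed := hcon b ((p.append (SimpleGraph.Walk.cons huv q.reverse)))
    rw [Nat.not_odd_iff_even, SimpleGraph.Walk.length_append, SimpleGraph.Walk.length_cons,
      SimpleGraph.Walk.length_reverse] at hclosed
    have : (Odd p.length ↔ Odd q.length) := by
      simpa [f, decide_eq_decide] using hf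
    rcases Nat.even_or_odd p.length with hp | hp <;>
      rcases Nat.even_or_odd q.length with hq | hq <;>
      simp [Nat.odd_iff, Nat.even_iff] at * <;> omega
  have C : G.Coloring Bool := SimpleGraph.Coloring.mk f valid
  simpa using C.colorable

end Graph

section Graph2
open SimpleGraph
variable {n : ℕ} {G : SimpleGraph (Fin n)}

/-- there is a minimal odd closed walk whose support tail has no duplicates -/
lemma exists_odd_cycle_walk (hconn : G.Connected) (hnb : ¬ G.Colorable 2) :
    ∃ (u : Fin n) (W : G.Walk u u), Odd W.length ∧ W.support.tail.Nodup := by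
  classical
  obtain ⟨u0, W0, h0⟩ := exists_odd_closed_walk hconn hnb
  let T : Set ℕ := {L | Odd L ∧ ∃ (u : Fin n) (W : G.Walk u u), W.length = L}
  have hT : W0.length ∈ T := ⟨h0, u0, W0, rfl⟩
  have hmem := Nat.sInf_mem (Set.nonempty_of_mem hT)
  obtain ⟨hodd, u, W, hWlen⟩ := hmem
  refine ⟨u, W, hWlen ▸ hodd, ?_⟩
  by_contra hnd
  -- get a vertex with count ≥ 2 in the tail
  rw [List.nodup_iff_count_le_one] at hnd
  push_neg at hnd
  obtain ⟨x, hx2⟩ := hnd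
  have hx2 : 2 ≤ List.count x W.support.tail := hx2
  have hxsupp : x ∈ W.support := by
    rw [SimpleGraph.Walk.support_eq_cons]
    exact List.mem_cons_of_mem _ (List.count_pos_iff.mp (by omega))
  set W' := W.rotate x hxsupp with hW'
  have hlen' : W'.length = W.length := by
    rw [hW', SimpleGraph.Walk.rotate, SimpleGraph.Walk.length_append]
    conv_rhs => rw [← SimpleGraph.Walk.take_spec W hxsupp]
    rw [SimpleGraph.Walk.length_append]
    omega
  have hcount' : 2 ≤ List.count x W'.support.tail := by
    rw [(SimpleGraph.Walk.support_rotate W x hxsupp).perm.count_eq]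
    exact hx2
  -- W' is a closed walk at x with x appearing twice in its tail
  cases hW2 : W' with
  | nil => rw [hW2] at hlen'; rw [← hlen'] at hWlen; rw [← hWlen] at hodd; simp at hodd
  | @cons _ y _ h r =>
    have htail : W'.support.tail = r.support := by rw [hW2, SimpleGraph.Walk.support_cons]; rfl
    rw [htail] at hcount'
    have hxr : x ∈ r.support := List.count_pos_iff.mp (by omega)
    set p1 := r.takeUntil x hxr
    set p2 := r.dropUntil x hxr
    have hspec : p1.append p2 = r := SimpleGraph.Walk.take_spec r hxr
    have hcnt : List.count x r.support = List.count x p1.support + List.count x p2.support.tail := by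
      rw [← hspec, SimpleGraph.Walk.support_append, List.count_append]
    have h1 : List.count x p1.support = 1 := SimpleGraph.Walk.count_support_takeUntil_eq_one r hxr
    have h2 : 1 ≤ List.count x p2.support.tail := by omega
    have hp2len : 1 ≤ p2.length := by
      by_contra hp
      push_neg at hp
      interval_cases hl : p2.length
      · have : p2.support.tail = [] := by
          have := SimpleGraph.Walk.length_support p2
          rw [hl] at this
          cases hsup : p2.support with
          | nil => simp [hsup] at this
          | cons a l =>
            rw [hsup] at this
            simp at this
            simp [this]
        rw [this] at h2
        simp at h2
    have hlensum : 1 + p1.length + p2.length = W.length := by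
      have := congrArg SimpleGraph.Walk.length hspec
      rw [SimpleGraph.Walk.length_append] at this
      have hW2l := congrArg SimpleGraph.Walk.length hW2
      rw [SimpleGraph.Walk.length_cons] at hW2l
      omega
    -- one of the two closed walks (cons h p1 : Walk x x) and p2 : Walk x x is odd and shorter
    have hWpos : Odd W.length := hWlen ▸ hodd
    rcases Nat.even_or_odd (1 + p1.length) with he | ho
    · -- then p2 odd
      have hp2odd : Odd p2.length := by
        rcases he with ⟨a, ha⟩; rcases hWpos with ⟨b, hb⟩
        refine ⟨b - a, by omega⟩
      have : p2.length ∈ T := ⟨hp2odd, x, p2, rfl⟩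
      have := Nat.sInf_le this
      omega
    · have : (SimpleGraph.Walk.cons h p1).length ∈ T := ⟨by rw [SimpleGraph.Walk.length_cons, Nat.add_comm]; exact ho, x, SimpleGraph.Walk.cons h p1, rfl⟩
      have := Nat.sInf_le this
      rw [SimpleGraph.Walk.length_cons] at this
      omega

end Graph2

section Graph3
open SimpleGraph
variable {n : ℕ} {G : SimpleGraph (Fin n)}

lemma exists_boundary_edge {S : Set (Fin n)} :
    ∀ {u v : Fin n} (_ : G.Walk u v), u ∈ S → v ∉ S → ∃ x ∈ S, ∃ y, y ∉ S ∧ G.Adj x y := by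
  intro u v p
  induction p with
  | nil => intro h1 h2; exact absurd h1 h2
  | @cons a b c h q ih =>
    intro h1 h2
    by_cases hb : b ∈ S
    · exact ih hb h2
    · exact ⟨a, h1, b, hb, h⟩

lemma end_mem_support_tail {u : Fin n} (W : G.Walk u u) (hl : W.length ≠ 0) :
    u ∈ W.support.tail := by
  cases W with
  | nil => simp at hl
  | cons h q => rw [SimpleGraph.Walk.support_cons]; exact q.end_mem_support

lemma mem_support_rotate [DecidableEq (Fin n)] {u x z : Fin n} (W : G.Walk u u)
    (hl : W.length ≠ 0) (hx : x ∈ W.support) :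
    z ∈ (W.rotate x hx).support ↔ z ∈ W.support := by
  have hrot := (SimpleGraph.Walk.support_rotate W x hx).perm
  have hlrot : (W.rotate x hx).length ≠ 0 := by
    have : (W.rotate x hx).length = W.length := by
      rw [SimpleGraph.Walk.rotate, SimpleGraph.Walk.length_append]
      conv_rhs => rw [← SimpleGraph.Walk.take_spec W hx]
      rw [SimpleGraph.Walk.length_append]; omega
    omega
  constructor
  · intro hz
    rw [SimpleGraph.Walk.support_eq_cons] at hz
    rcases List.mem_cons.mp hz with rfl | hz
    · exact hx
    · rw [SimpleGraph.Walk.support_eq_cons]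
      exact List.mem_cons_of_mem _ (hrot.mem_iff.mp hz)
  · intro hz
    rw [SimpleGraph.Walk.support_eq_cons] at hz
    rcases List.mem_cons.mp hz with rfl | hz
    · rw [SimpleGraph.Walk.support_eq_cons]
      exact List.mem_cons_of_mem _ (hrot.mem_iff.mpr (end_mem_support_tail W hl))
    · rw [SimpleGraph.Walk.support_eq_cons]
      exact List.mem_cons_of_mem _ (hrot.mem_iff.mpr hz)

lemma cover_aux [DecidableEq (Fin n)] (hconn : G.Connected) :
    ∀ (m : ℕ) (u : Fin n) (W : G.Walk u u), W.length ≠ 0 →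
      (Finset.univ \ W.support.toFinset).card = m →
      ∃ (v : Fin n) (W' : G.Walk v v), W'.length = W.length + 2 * m ∧ ∀ i, i ∈ W'.support := by
  intro m
  induction m with
  | zero =>
    intro u W _ hcard
    refine ⟨u, W, by omega, ?_⟩
    intro i
    have : Finset.univ \ W.support.toFinset = ∅ := Finset.card_eq_zero.mp hcard
    have := Finset.sdiff_eq_empty_iff_subset.mp this (Finset.mem_univ i)
    exact List.mem_toFinset.mp this
  | succ m ih =>
    intro u W hl hcard
    -- pick b outside the support
    have hne : (Finset.univ \ W.support.toFinset).Nonempty := by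
      rw [← Finset.card_pos, hcard]; omega
    obtain ⟨b, hb⟩ := hne
    rw [Finset.mem_sdiff, List.mem_toFinset] at hb
    obtain ⟨x, hxS, y, hyS, hxy⟩ :=
      exists_boundary_edge (S := {z | z ∈ W.support}) ((hconn.preconnected u b).some)
        W.start_mem_support hb.2
    have hyS : y ∉ W.support := hyS
    set Wr := W.rotate x hxS with hWr
    have hWrlen : Wr.length = W.length := by
      rw [hWr, SimpleGraph.Walk.rotate, SimpleGraph.Walk.length_append]
      conv_rhs => rw [← SimpleGraph.Walk.take_spec W hxS]
      rw [SimpleGraph.Walk.length_append]; omega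
    set W2 := Wr.append (SimpleGraph.Walk.cons hxy (SimpleGraph.Walk.cons hxy.symm SimpleGraph.Walk.nil)) with hW2
    have hW2len : W2.length = W.length + 2 := by
      rw [hW2, SimpleGraph.Walk.length_append]
      simp [hWrlen]
    have hW2supp : ∀ z, z ∈ W2.support ↔ z ∈ W.support ∨ z = y := by
      intro z
      rw [hW2, SimpleGraph.Walk.support_append, List.mem_append]
      constructor
      · rintro (hz | hz)
        · exact Or.inl ((mem_support_rotate W hl hxS).mp hz)
        · simp [SimpleGraph.Walk.support_cons] at hz
          rcases hz with rfl | rfl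
          · exact Or.inr rfl
          · exact Or.inl hxS
      · rintro (hz | rfl)
        · by_cases hzx : z = x
          · subst hzx; exact Or.inl Wr.start_mem_support
          · exact Or.inl ((mem_support_rotate W hl hxS).mpr hz)
        · right; simp [SimpleGraph.Walk.support_cons]
    have hcard2 : (Finset.univ \ W2.support.toFinset).card = m := by
      have hset : Finset.univ \ W2.support.toFinset = (Finset.univ \ W.support.toFinset).erase y := by
        ext z
        simp only [Finset.mem_erase, Finset.mem_sdiff, Finset.mem_univ, true_and,
          List.mem_toFinset, hW2supp z]
        constructor
        · intro hz; push_neg at hz; exact ⟨hz.2, hz.1⟩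
        · intro hz; push_neg; exact ⟨hz.2, hz.1⟩
      rw [hset, Finset.card_erase_of_mem (by rw [Finset.mem_sdiff, List.mem_toFinset]; exact ⟨Finset.mem_univ y, hyS⟩), hcard]
      omega
    obtain ⟨v, W', hlen, hsupp⟩ := ih x W2 (by omega) hcard2
    exact ⟨v, W', by omega, hsupp⟩

end Graph3

section Graph4
open SimpleGraph
variable {n : ℕ} {G : SimpleGraph (Fin n)}

lemma closed_walk_length_ne_one {u : Fin n} (W : G.Walk u u) : W.length ≠ 1 := by
  cases W with
  | nil => simp
  | cons h q =>
    cases q with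
    | nil => intro _; exact G.loopless.irrefl u h
    | cons h' r => simp [SimpleGraph.Walk.length_cons]

/-- spanning closed odd walk of length ≤ 2n - 3 -/
lemma exists_spanning_odd_walk [DecidableEq (Fin n)] (hconn : G.Connected) (hnb : ¬ G.Colorable 2) :
    ∃ (v : Fin n) (W : G.Walk v v), Odd W.length ∧ (∀ i, i ∈ W.support) ∧ W.length + 3 ≤ 2 * n := by
  obtain ⟨u, W0, hodd, hnd⟩ := exists_odd_cycle_walk hconn hnb
  set L0 := W0.length with hL0
  have hL3 : 3 ≤ L0 := by
    have h1 := closed_walk_length_ne_one W0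
    rcases hodd with ⟨c, hc⟩
    omega
  set A := W0.support.toFinset with hA
  have hsA : L0 ≤ A.card := by
    have h1 : W0.support.tail.toFinset ⊆ A := by
      intro z hz
      rw [List.mem_toFinset] at hz ⊢
      rw [SimpleGraph.Walk.support_eq_cons]
      exact List.mem_cons_of_mem _ hz
    have h2 : W0.support.tail.toFinset.card = L0 := by
      rw [List.toFinset_card_of_nodup hnd]
      have := SimpleGraph.Walk.length_support W0
      rw [List.length_tail, this]
      omega
    calc L0 = _ := h2.symm
    _ ≤ A.card := Finset.card_le_card h1
  have hAcard : A.card ≤ n := by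
    calc A.card ≤ (Finset.univ : Finset (Fin n)).card := Finset.card_le_card (Finset.subset_univ A)
    _ = n := by simp
  have hm : (Finset.univ \ A).card = n - A.card := by
    rw [Finset.card_sdiff_of_subset (Finset.subset_univ A)]
    simp
  obtain ⟨v, W', hlen, hsupp⟩ := cover_aux hconn ((Finset.univ \ A).card) u W0 (by omega) rfl
  refine ⟨v, W', ?_, hsupp, ?_⟩
  · rw [hlen]
    rcases hodd with ⟨c, hc⟩
    exact ⟨c + (Finset.univ \ A).card, by omega⟩
  · rw [hlen, hm]
    omega

lemma exists_adj_of_walk {u v : Fin n} (p : G.Walk u v) (h : p.length ≠ 0) :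
    ∃ a b : Fin n, G.Adj a b := by
  cases p with
  | nil => simp at h
  | cons h' q => exact ⟨_, _, h'⟩

/-- the bouncing walk -/
def bounce {a b : Fin n} (h : G.Adj a b) : ℕ → G.Walk a a
  | 0 => SimpleGraph.Walk.nil
  | t + 1 => SimpleGraph.Walk.cons h (SimpleGraph.Walk.cons h.symm (bounce h t))

lemma monProd_bounce (K : Type*) [Field K] {a b : Fin n} (h : G.Adj a b) (t : ℕ) :
    monProd K (bounce h t) = (MvPolynomial.X a * MvPolynomial.X b) ^ t ∧ (bounce h t).length = 2 * t := by
  induction t with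
  | zero => simp [bounce]
  | succ t ih =>
    constructor
    · rw [bounce, monProd_cons, monProd_cons, ih.1, pow_succ]
      ring
    · rw [bounce, SimpleGraph.Walk.length_cons, SimpleGraph.Walk.length_cons, ih.2]
      omega

end Graph4

section Depth
open MvPolynomial
variable (K : Type*) [Field K] {n : ℕ}

lemma quotDepth_eq_zero_of_witness {I : Ideal (MvPolynomial (Fin n) K)}
    (w : MvPolynomial (Fin n) K) (hw : w ∉ I) (hmul : ∀ i : Fin n, X i * w ∈ I) :
    quotDepth K I = 0 := by
  have hrw : ∀ r ∈ maxIdeal K n, r * w ∈ I := by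
    intro r hr
    refine Submodule.span_induction ?_ ?_ ?_ ?_ hr
    · rintro p ⟨i, rfl⟩; exact hmul i
    · simp
    · intro p q _ _ hp hq; rw [add_mul]; exact I.add_mem hp hq
    · intro c p _ hp
      rw [smul_eq_mul, mul_assoc]
      exact I.mul_mem_left c hp
  set T := {k | ∃ rs : List (MvPolynomial (Fin n) K), rs.length = k ∧
    (∀ r ∈ rs, r ∈ maxIdeal K n) ∧
    RingTheory.Sequence.IsRegular (MvPolynomial (Fin n) K ⧸ I) rs} with hT
  have hsub : ∀ k ∈ T, k = 0 := by
    rintro k ⟨rs, hlen, hmem, hreg⟩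
    cases rs with
    | nil => simpa using hlen.symm
    | cons r rest =>
      exfalso
      have h1 : IsSMulRegular (MvPolynomial (Fin n) K ⧸ I) r :=
        ((RingTheory.Sequence.isRegular_cons_iff _ _ _).mp hreg).1
      have hw0 : (Ideal.Quotient.mk I) w ≠ 0 := by
        rwa [Ne, Ideal.Quotient.eq_zero_iff_mem]
      apply hw0
      have h2 : r • (Ideal.Quotient.mk I w) = r • (0 : MvPolynomial (Fin n) K ⧸ I) := by
        rw [smul_zero]
        show Ideal.Quotient.mk I (r * w) = 0
        rw [Ideal.Quotient.eq_zero_iff_mem]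
        exact hrw r (hmem r (List.mem_cons_self))
      exact h1 h2
  rw [quotDepth, ← hT]
  by_cases hne : T.Nonempty
  · have := csSup_le hne (fun x hx => le_of_eq (hsub x hx))
    omega
  · rw [Set.not_nonempty_iff_eq_empty] at hne
    rw [hne, csSup_empty]
    rfl

end Depth



/-- for a connected non-bipartite graph `G` on `n` vertices,
`depth S/I_G^k = 0` for all `k ≥ n - 1`. -/

theorem stmt5 (K : Type*) [Field K] {n : ℕ} (G : SimpleGraph (Fin n))
    (hconn : G.Connected) (hnb : ¬ G.Colorable 2) :
    ∀ k : ℕ, n - 1 ≤ k → quotDepth K ((edgeIdeal K G) ^ k) = 0 := by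
  intro k hk
  classical
  have hn : 1 ≤ n := by
    have : Nonempty (Fin n) := hconn.nonempty
    obtain ⟨b⟩ := this
    exact b.pos
  obtain ⟨v, Wf, hodd, hall, hbound⟩ := exists_spanning_odd_walk hconn hnb
  obtain ⟨j, hj⟩ := hodd
  have hjk : j + 1 ≤ k := by omega
  -- an edge of G
  obtain ⟨a, b, hab⟩ : ∃ a b : Fin n, G.Adj a b :=
    exists_adj_of_walk Wf (by omega)
  set t := k - (j + 1) with ht
  set w := monProd K Wf * (X a * X b) ^ t with hw
  -- the multiplication property
  have hwmem : ∀ i : Fin n, X i * w ∈ edgeIdeal K G ^ k := by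
    intro i
    have hi : i ∈ Wf.support := hall i
    have hrot : monProd K (Wf.rotate i hi) = monProd K Wf := monProd_rotate K Wf hi
    have hrotlen : (Wf.rotate i hi).length = Wf.length := by
      rw [SimpleGraph.Walk.rotate, SimpleGraph.Walk.length_append]
      conv_rhs => rw [← SimpleGraph.Walk.take_spec Wf hi]
      rw [SimpleGraph.Walk.length_append]
      omega
    have h1 : monProd K (Wf.rotate i hi) * X i ∈ edgeIdeal K G ^ (j + 1) :=
      monProd_mul_mem K j (Wf.rotate i hi) (by omega)
    have h2 : (X a * X b) ^ t ∈ edgeIdeal K G ^ t :=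
      Ideal.pow_mem_pow (mem_edge K a b hab) t
    have h3 : (monProd K (Wf.rotate i hi) * X i) * ((X a * X b) ^ t)
        ∈ edgeIdeal K G ^ (j + 1) * edgeIdeal K G ^ t := Ideal.mul_mem_mul h1 h2
    rw [← pow_add] at h3
    have hk' : j + 1 + t = k := by omega
    rw [hk'] at h3
    have : X i * w = (monProd K (Wf.rotate i hi) * X i) * ((X a * X b) ^ t) := by
      rw [hrot, hw]; ring
    rwa [this]
  -- w is not in the power
  have hwnot : w ∉ edgeIdeal K G ^ k := by
    intro hmem
    obtain ⟨e1, he1, hd1⟩ := monProd_eq_monomial K Wf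
    obtain ⟨e2, he2, hd2⟩ := monProd_eq_monomial K (bounce hab t)
    have hb2 := monProd_bounce K hab t
    have hwm : w = MvPolynomial.monomial (e1 + e2) 1 := by
      rw [hw, he1, ← hb2.1, he2, MvPolynomial.monomial_mul, one_mul]
    have hdeg : fdeg (e1 + e2) = 2 * k - 1 := by
      rw [fdeg_add, hd1, hd2, hb2.2, hj]
      omega
    have := edgeIdeal_pow_le_Jdeg K G k hmem
    rw [mem_Jdeg] at this
    have hsupp : e1 + e2 ∈ w.support := by
      rw [hwm, MvPolynomial.support_monomial]
      simp
    have := this _ hsupp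
    omega
  exact quotDepth_eq_zero_of_witness K w hwnot hwmem
end

section
/- Let G be a tree on vertex set [n] such that vertex 1 has degree 1 and vertex 2 is its unique neighbor, and let I_G ⊂ S = K[x_1,...,x_n] be its edge ideal. Then x_1 - x_2 is a non-zerodivisor on S/I_G^k for every k ≥ 1. -/
open MvPolynomial

namespace S14

variable {n : ℕ}

/-- exponent vector of an edge -/
noncomputable def chi (p : Fin n × Fin n) : Fin n →₀ ℕ :=
  Finsupp.single p.1 1 + Finsupp.single p.2 1

/-- sums of `k` edge exponent vectors -/
def edgeSums (G : SimpleGraph (Fin n)) (k : ℕ) : Set (Fin n →₀ ℕ) :=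
  {d | ∃ M : Multiset (Fin n × Fin n),
    M.card = k ∧ (∀ p ∈ M, G.Adj p.1 p.2) ∧ (M.map chi).sum = d}

lemma X_mul_X (K : Type*) [Field K] (i j : Fin n) :
    (X i * X j : MvPolynomial (Fin n) K)
      = monomial (Finsupp.single i 1 + Finsupp.single j 1) 1 := by
  have hi : (X i : MvPolynomial (Fin n) K) = monomial (Finsupp.single i 1) 1 := by
    rw [← X_pow_eq_monomial, pow_one]
  have hj : (X j : MvPolynomial (Fin n) K) = monomial (Finsupp.single j 1) 1 := by
    rw [← X_pow_eq_monomial, pow_one]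
  rw [hi, hj, monomial_mul, one_mul]

lemma edgeIdeal_eq_span (K : Type*) [Field K] (G : SimpleGraph (Fin n)) :
    edgeIdeal K G
      = Ideal.span ((fun s => monomial s (1 : K)) '' edgeSums G 1) := by
  unfold edgeIdeal
  congr 1
  ext f
  constructor
  · rintro ⟨i, j, hij, rfl⟩
    refine ⟨chi (i, j), ⟨{(i, j)}, by simp, by simp [hij], by simp⟩, ?_⟩
    simp [chi, X_mul_X]
  · rintro ⟨d, ⟨M, hcard, hadj, hsum⟩, rfl⟩
    obtain ⟨p, rfl⟩ := Multiset.card_eq_one.mp hcard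
    refine ⟨p.1, p.2, hadj p (by simp), ?_⟩
    simp only [Multiset.map_singleton, Multiset.sum_singleton] at hsum
    rw [X_mul_X, ← hsum]
    rfl

lemma pow_edgeIdeal_eq_span (K : Type*) [Field K] (G : SimpleGraph (Fin n)) (k : ℕ) :
    (edgeIdeal K G) ^ k
      = Ideal.span ((fun s => monomial s (1 : K)) '' edgeSums G k) := by
  induction k with
  | zero =>
      have h0 : edgeSums G 0 = {0} := by
        ext d
        constructor
        · rintro ⟨M, hcard, -, hsum⟩
          rw [Multiset.card_eq_zero.mp hcard] at hsum
          simp at hsum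
          simp [← hsum]
        · rintro rfl
          exact ⟨0, by simp, by simp, by simp⟩
      rw [pow_zero, h0]
      simp [Ideal.span_singleton_one, monomial_zero', C_1]
  | succ k ih =>
      rw [pow_succ, ih, edgeIdeal_eq_span K G, Ideal.span_mul_span']
      congr 1
      ext f
      constructor
      · rintro ⟨x, ⟨d, ⟨M, hcard, hadj, hsum⟩, rfl⟩, y,
          ⟨e, ⟨M', hcard', hadj', hsum'⟩, rfl⟩, rfl⟩
        refine ⟨d + e, ⟨M + M', by simp [hcard, hcard'], ?_, by
          simp [Multiset.map_add, hsum, hsum']⟩, ?_⟩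
        · intro p hp
          rcases Multiset.mem_add.mp hp with h | h
          · exact hadj p h
          · exact hadj' p h
        · simp [monomial_mul]
      · rintro ⟨d, ⟨M, hcard, hadj, hsum⟩, rfl⟩
        have hM0 : M ≠ 0 := by
          intro h
          rw [h] at hcard
          simp at hcard
        obtain ⟨p, hp⟩ := Multiset.exists_mem_of_ne_zero hM0
        obtain ⟨t, rfl⟩ := Multiset.exists_cons_of_mem hp
        refine ⟨monomial ((t.map chi).sum) 1,
          ⟨(t.map chi).sum, ⟨t, ?_, fun q hq => hadj q (Multiset.mem_cons_of_mem hq), rfl⟩, rfl⟩,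
          monomial (chi p) 1,
          ⟨chi p, ⟨{p}, by simp, by simp [hadj p hp], by simp⟩, rfl⟩, ?_⟩
        · simpa using hcard
        · show (monomial _ 1 : MvPolynomial (Fin n) K) * monomial _ 1 = _
          rw [monomial_mul, one_mul]
          congr 1
          rw [← hsum]
          simp [add_comm]

lemma mem_pow_iff (K : Type*) [Field K] (G : SimpleGraph (Fin n)) (k : ℕ)
    (f : MvPolynomial (Fin n) K) :
    f ∈ (edgeIdeal K G) ^ k ↔ ∀ u ∈ f.support, ∃ d ∈ edgeSums G k, d ≤ u := by
  rw [pow_edgeIdeal_eq_span, mem_ideal_span_monomial_image]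


/-- vertex covers -/
def IsCover (G : SimpleGraph (Fin n)) (C : Finset (Fin n)) : Prop :=
  ∀ i j, G.Adj i j → i ∈ C ∨ j ∈ C

noncomputable def usageF (M : Multiset (Fin n × Fin n)) : Fin n →₀ ℕ :=
  (M.map chi).sum

@[simp] lemma usageF_zero : usageF (0 : Multiset (Fin n × Fin n)) = 0 := rfl

@[simp] lemma usageF_cons (p : Fin n × Fin n) (M : Multiset (Fin n × Fin n)) :
    usageF (p ::ₘ M) = chi p + usageF M := by
  simp [usageF]

/-- easy direction: a `k`-fold edge sum has total degree `≥ k` on any cover -/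
lemma cover_le_sum (G : SimpleGraph (Fin n)) {C : Finset (Fin n)} (hC : IsCover G C)
    (M : Multiset (Fin n × Fin n)) (hM : ∀ p ∈ M, G.Adj p.1 p.2) :
    M.card ≤ ∑ i ∈ C, usageF M i := by
  induction M using Multiset.induction with
  | empty => simp
  | cons p M ih =>
      have h1 : 1 ≤ ∑ i ∈ C, chi p i := by
        rcases hC p.1 p.2 (hM p (Multiset.mem_cons_self _ _)) with h | h
        · calc 1 ≤ chi p p.1 := by simp [chi, Finsupp.single_apply]
            _ ≤ ∑ i ∈ C, chi p i :=
              Finset.single_le_sum (fun i _ => Nat.zero_le _) h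
        · calc 1 ≤ chi p p.2 := by simp [chi, Finsupp.single_apply]
            _ ≤ ∑ i ∈ C, chi p i :=
              Finset.single_le_sum (fun i _ => Nat.zero_le _) h
      have ih' := ih (fun q hq => hM q (Multiset.mem_cons_of_mem hq))
      simp only [usageF_cons, Finsupp.add_apply, Finset.sum_add_distrib, Multiset.card_cons]
      omega

/-- every finite acyclic graph with an edge has a leaf -/
lemma exists_leaf (G : SimpleGraph (Fin n)) (hac : G.IsAcyclic)
    (hne : ∃ i j, G.Adj i j) :
    ∃ ℓ p, G.Adj ℓ p ∧ ∀ q, G.Adj ℓ q → q = p := by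
  classical
  obtain ⟨i, j, hij⟩ := hne
  set P : ℕ → Prop := fun l =>
    ∃ (a b : Fin n) (w : G.Walk a b), w.IsPath ∧ w.length = l with hP
  have h1 : P 1 := ⟨i, j, SimpleGraph.Walk.cons hij SimpleGraph.Walk.nil, by
    simp [SimpleGraph.Walk.cons_isPath_iff, hij.ne], by simp⟩
  have hbd : ∀ l, P l → l ≤ n := by
    rintro l ⟨a, b, w, hw, rfl⟩
    have := hw.length_lt
    simp only [Fintype.card_fin] at this
    omega
  set L := Nat.findGreatest P n with hLdef
  have hPL : P L := Nat.findGreatest_spec (hbd 1 h1) h1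
  have hL1 : 1 ≤ L := Nat.le_findGreatest (hbd 1 h1) h1
  have hmax : ¬ P (L + 1) := by
    intro h
    exact Nat.findGreatest_is_greatest (Nat.lt_succ_self L) (hbd _ h) h
  obtain ⟨a, b, w, hw, hlen⟩ := hPL
  cases w with
  | nil => simp at hlen; omega
  | @cons _ c _ h0 w0 =>
      refine ⟨a, c, h0, fun q hq => ?_⟩
      by_contra hne'
      have hqsup : q ∈ (SimpleGraph.Walk.cons h0 w0).support := by
        by_contra hqs
        exact hmax ⟨q, b, SimpleGraph.Walk.cons hq.symm (SimpleGraph.Walk.cons h0 w0),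
          by rw [SimpleGraph.Walk.cons_isPath_iff]; exact ⟨hw, hqs⟩, by simp [← hlen]⟩
      set p := SimpleGraph.Walk.cons h0 w0 with hpdef
      have hcyc := hac (SimpleGraph.Walk.cons hq.symm (p.takeUntil q hqsup))
      rw [SimpleGraph.Walk.cons_isCycle_iff] at hcyc
      push_neg at hcyc
      have hmem : s(q, a) ∈ (p.takeUntil q hqsup).edges :=
        hcyc (hw.takeUntil hqsup)
      have hmem' : s(q, a) ∈ p.edges :=
        SimpleGraph.Walk.edges_takeUntil_subset p hqsup hmem
      rw [hpdef, SimpleGraph.Walk.edges_cons, List.mem_cons] at hmem'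
      rcases hmem' with h | h
      · rw [Sym2.eq_iff] at h
        rcases h with ⟨rfl, rfl⟩ | ⟨rfl, -⟩
        · exact hq.ne rfl
        · exact hne' rfl
      · have : a ∈ w0.support := SimpleGraph.Walk.snd_mem_support_of_mem_edges w0 h
        rw [SimpleGraph.Walk.cons_isPath_iff] at hw
        exact hw.2 this



lemma isAcyclic_mono {G H : SimpleGraph (Fin n)} (h : H ≤ G) (hac : G.IsAcyclic) :
    H.IsAcyclic := by
  intro v c hc
  exact hac (c.mapLe h) (hc.mapLe h)

/-- König-type theorem for forests, capacitated version. -/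
lemma thmM (N : ℕ) : ∀ (G : SimpleGraph (Fin n)), G.IsAcyclic → ∀ (d : Fin n → ℕ) (k : ℕ),
    2 * Set.ncard {p : Fin n × Fin n | G.Adj p.1 p.2} + (∑ v, d v) ≤ N →
    (∀ C : Finset (Fin n), IsCover G C → k ≤ ∑ i ∈ C, d i) →
    ∃ M : Multiset (Fin n × Fin n), M.card = k ∧ (∀ p ∈ M, G.Adj p.1 p.2) ∧
      ∀ v, usageF M v ≤ d v := by
  classical
  induction N using Nat.strong_induction_on with
  | _ N IH =>
    intro G hac d k hmet hcov
    rcases Nat.eq_zero_or_pos k with rfl | hk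
    · exact ⟨0, rfl, by simp, by simp⟩
    by_cases hne : ∃ i j, G.Adj i j
    swap
    · push_neg at hne
      have := hcov ∅ (fun i j h => absurd h (hne i j))
      simp at this
      omega
    obtain ⟨ℓ, pn, hadj, huniq⟩ := exists_leaf G hac hne
    have hlp : ℓ ≠ pn := hadj.ne
    -- edge sets
    set ES : Set (Fin n × Fin n) := {p : Fin n × Fin n | G.Adj p.1 p.2} with hES
    by_cases hd : d ℓ = 0 ∨ d pn = 0
    · -- delete the leaf edge
      set G' := G.deleteEdges {s(ℓ, pn)} with hG'
      have hle : G' ≤ G := G.deleteEdges_le _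
      have hac' : G'.IsAcyclic := isAcyclic_mono hle hac
      have hG'adj : ∀ i j, G'.Adj i j ↔ G.Adj i j ∧ ¬ s(i, j) = s(ℓ, pn) := by
        intro i j
        rw [hG', SimpleGraph.deleteEdges_adj]
        simp
      have hss : {p : Fin n × Fin n | G'.Adj p.1 p.2} ⊂ ES := by
        constructor
        · intro p hp
          exact hle hp
        · intro hsub
          have h2 : ((ℓ, pn) : Fin n × Fin n) ∈ {p : Fin n × Fin n | G'.Adj p.1 p.2} :=
            hsub hadj
          rw [Set.mem_setOf_eq, hG'adj] at h2
          exact h2.2 rfl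
      have hcard : Set.ncard {p : Fin n × Fin n | G'.Adj p.1 p.2} < Set.ncard ES :=
        Set.ncard_lt_ncard hss (Set.toFinite _)
      have hmet' : 2 * Set.ncard {p : Fin n × Fin n | G'.Adj p.1 p.2} + (∑ v, d v) < N := by
        omega
      -- cover condition for G'
      have hcov' : ∀ C : Finset (Fin n), IsCover G' C → k ≤ ∑ i ∈ C, d i := by
        intro C hC
        rcases hd with hd | hd
        · -- add ℓ (free since d ℓ = 0)
          have hCov : IsCover G (insert ℓ C) := by
            intro i j hij
            by_cases he : s(i, j) = s(ℓ, pn)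
            · rw [Sym2.eq_iff] at he
              rcases he with ⟨rfl, rfl⟩ | ⟨rfl, rfl⟩
              · exact Or.inl (Finset.mem_insert_self _ _)
              · exact Or.inr (Finset.mem_insert_self _ _)
            · rcases hC i j ((hG'adj i j).mpr ⟨hij, he⟩) with h | h
              · exact Or.inl (Finset.mem_insert_of_mem h)
              · exact Or.inr (Finset.mem_insert_of_mem h)
          have := hcov _ hCov
          rwa [Finset.sum_insert_of_eq_zero_if_notMem (fun _ => hd)] at this
        · have hCov : IsCover G (insert pn C) := by
            intro i j hij
            by_cases he : s(i, j) = s(ℓ, pn)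
            · rw [Sym2.eq_iff] at he
              rcases he with ⟨rfl, rfl⟩ | ⟨rfl, rfl⟩
              · exact Or.inr (Finset.mem_insert_self _ _)
              · exact Or.inl (Finset.mem_insert_self _ _)
            · rcases hC i j ((hG'adj i j).mpr ⟨hij, he⟩) with h | h
              · exact Or.inl (Finset.mem_insert_of_mem h)
              · exact Or.inr (Finset.mem_insert_of_mem h)
          have := hcov _ hCov
          rwa [Finset.sum_insert_of_eq_zero_if_notMem (fun _ => hd)] at this
      obtain ⟨M, hMc, hMa, hMu⟩ := IH _ hmet' G' hac' d k (le_refl _) hcov'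
      exact ⟨M, hMc, fun p hp => hle (hMa p hp), hMu⟩
    · push_neg at hd
      obtain ⟨hdl, hdp⟩ := hd
      -- use the leaf edge once
      set d' : Fin n → ℕ := fun v => if v = ℓ ∨ v = pn then d v - 1 else d v with hd'
      have hsumlt : ∑ v, d' v < ∑ v, d v := by
        have hle1 : ∀ i ∈ Finset.univ, d' i ≤ d i := by
          intro i _
          show (if i = ℓ ∨ i = pn then d i - 1 else d i) ≤ d i
          split <;> omega
        have hlt1 : d' ℓ < d ℓ := by
          show (if ℓ = ℓ ∨ ℓ = pn then d ℓ - 1 else d ℓ) < d ℓ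
          rw [if_pos (Or.inl rfl)]
          omega
        exact Finset.sum_lt_sum hle1 ⟨ℓ, Finset.mem_univ _, hlt1⟩
      have hmet' : 2 * Set.ncard ES + (∑ v, d' v) < N := by omega
      have hcov' : ∀ C : Finset (Fin n), IsCover G C → k - 1 ≤ ∑ i ∈ C, d' i := by
        intro C hC
        have herase : ℓ ∈ C → pn ∈ C → IsCover G (C.erase ℓ) := by
          intro hℓ hpn i j hij
          by_cases hi : i = ℓ
          · subst hi
            have := huniq j hij
            subst this
            exact Or.inr (Finset.mem_erase.mpr ⟨Ne.symm hlp, hpn⟩)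
          by_cases hj : j = ℓ
          · subst hj
            have := huniq i hij.symm
            subst this
            exact Or.inl (Finset.mem_erase.mpr ⟨Ne.symm hlp, hpn⟩)
          rcases hC i j hij with h | h
          · exact Or.inl (Finset.mem_erase.mpr ⟨hi, h⟩)
          · exact Or.inr (Finset.mem_erase.mpr ⟨hj, h⟩)
        have hkey : ∀ (D : Finset (Fin n)), IsCover G D →
            ℓ ∈ D ∨ pn ∈ D := fun D hD => hD ℓ pn hadj
        -- helper: sums over a finset where d' differs from d at one point
        have hsum_one : ∀ (D : Finset (Fin n)) (x : Fin n), x ∈ D →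
            (x = ℓ ∨ x = pn) → (∀ y ∈ D, y ≠ x → ¬(y = ℓ ∨ y = pn)) →
            ∑ i ∈ D, d' i + 1 = ∑ i ∈ D, d i := by
          intro D x hx hxor hother
          rw [← Finset.add_sum_erase _ d' hx, ← Finset.add_sum_erase _ d hx]
          have h1 : d' x + 1 = d x := by
            show (if x = ℓ ∨ x = pn then d x - 1 else d x) + 1 = d x
            rw [if_pos hxor]
            rcases hxor with rfl | rfl <;> omega
          have h2 : ∑ i ∈ D.erase x, d' i = ∑ i ∈ D.erase x, d i := by
            apply Finset.sum_congr rfl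
            intro y hy
            rw [Finset.mem_erase] at hy
            show (if y = ℓ ∨ y = pn then d y - 1 else d y) = d y
            rw [if_neg (hother y hy.2 hy.1)]
          omega
        by_cases hℓC : ℓ ∈ C
        · by_cases hpnC : pn ∈ C
          · -- both in C : use erase cover
            have hC' := herase hℓC hpnC
            have hk' := hcov _ hC'
            have hpn' : pn ∈ C.erase ℓ := Finset.mem_erase.mpr ⟨Ne.symm hlp, hpnC⟩
            have := hsum_one (C.erase ℓ) pn hpn' (Or.inr rfl) ?_
            · have hmono : ∑ i ∈ C.erase ℓ, d' i ≤ ∑ i ∈ C, d' i :=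
                Finset.sum_le_sum_of_subset (Finset.erase_subset _ _)
              omega
            · intro y hy hne'
              rw [Finset.mem_erase] at hy
              rintro (rfl | rfl)
              · exact hy.1 rfl
              · exact hne' rfl
          · have hk' := hcov _ hC
            have := hsum_one C ℓ hℓC (Or.inl rfl) ?_
            · omega
            · rintro y hy hne' (rfl | rfl)
              · exact hne' rfl
              · exact hpnC hy
        · rcases hkey C hC with h | hpnC
          · exact absurd h hℓC
          · have hk' := hcov _ hC
            have := hsum_one C pn hpnC (Or.inr rfl) ?_
            · omega
            · rintro y hy hne' (rfl | rfl)
              · exact hℓC hy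
              · exact hne' rfl
      obtain ⟨M', hMc, hMa, hMu⟩ := IH _ hmet' G hac d' (k - 1) (le_refl _) hcov'
      refine ⟨(ℓ, pn) ::ₘ M', by rw [Multiset.card_cons, hMc]; omega, ?_, ?_⟩
      · intro p hp
        rcases Multiset.mem_cons.mp hp with rfl | hp
        · exact hadj
        · exact hMa p hp
      · intro v
        have hthis : usageF M' v ≤ (if v = ℓ ∨ v = pn then d v - 1 else d v) := hMu v
        rw [usageF_cons]
        simp only [Finsupp.add_apply]
        have hchi : chi (ℓ, pn) v = (if ℓ = v then 1 else 0) + (if pn = v then 1 else 0) := by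
          simp [chi, Finsupp.single_apply]
        rw [hchi]
        by_cases hv : v = ℓ
        · subst hv
          rw [if_pos (Or.inl rfl)] at hthis
          rw [if_pos rfl, if_neg (Ne.symm hlp)]
          omega
        by_cases hv' : v = pn
        · subst hv'
          rw [if_pos (Or.inr rfl)] at hthis
          rw [if_pos rfl, if_neg hlp]
          omega
        · rw [if_neg (by tauto)] at hthis
          rw [if_neg (fun h => hv h.symm), if_neg (fun h => hv' h.symm)]
          omega


/-- one exchange step -/
lemma step (K : Type*) [Field K] (G : SimpleGraph (Fin n)) (k : ℕ)
    (g : MvPolynomial (Fin n) K) (v0 v1 : Fin n) (hv : v0 ≠ v1)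
    (H : ∀ m ∈ ((X v0 - X v1) * g).support, ∃ d ∈ edgeSums G k, d ≤ m)
    (u : Fin n →₀ ℕ) (hu : u ∈ g.support)
    (hP : ¬ ∃ d ∈ edgeSums G k, d ≤ u + Finsupp.single v0 1) :
    1 ≤ u v1 ∧ (u + Finsupp.single v0 1 - Finsupp.single v1 1) ∈ g.support ∧
      (u + Finsupp.single v0 1 - Finsupp.single v1 1) + Finsupp.single v1 1
        = u + Finsupp.single v0 1 := by
  classical
  set m : Fin n →₀ ℕ := u + Finsupp.single v0 1 with hm
  have hns : m ∉ ((X v0 - X v1) * g).support := fun hmem => hP (H m hmem)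
  rw [notMem_support_iff, sub_mul, coeff_sub, sub_eq_zero] at hns
  have h0 : coeff m (X v0 * g) = coeff u g := by
    rw [coeff_X_mul' m v0 g, if_pos, hm, add_tsub_cancel_right]
    rw [Finsupp.mem_support_iff, hm, Finsupp.add_apply, Finsupp.single_apply, if_pos rfl]
    omega
  have h1 : coeff m (X v1 * g) = coeff u g := by rw [← hns, h0]
  have hcu : coeff u g ≠ 0 := mem_support_iff.mp hu
  rw [coeff_X_mul' m v1 g] at h1
  by_cases hsup : v1 ∈ m.support
  · rw [if_pos hsup] at h1
    have hm1 : 1 ≤ u v1 := by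
      have := Finsupp.mem_support_iff.mp hsup
      rw [hm, Finsupp.add_apply, Finsupp.single_apply, if_neg hv] at this
      omega
    refine ⟨hm1, ?_, ?_⟩
    · rw [mem_support_iff, h1]
      exact hcu
    · apply tsub_add_cancel_of_le
      rw [Finsupp.single_le_iff, hm, Finsupp.add_apply, Finsupp.single_apply, if_neg hv]
      omega
  · rw [if_neg hsup] at h1
    exact absurd h1.symm hcu

lemma up (K : Type*) [Field K] (G : SimpleGraph (Fin n)) (k : ℕ)
    (g : MvPolynomial (Fin n) K) (v0 v1 : Fin n) (hv : v0 ≠ v1)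
    (H : ∀ m ∈ ((X v0 - X v1) * g).support, ∃ d ∈ edgeSums G k, d ≤ m) :
    ∀ (b : ℕ) (u : Fin n →₀ ℕ), u ∈ g.support → u v1 ≤ b →
    ∃ (t : ℕ) (top : Fin n →₀ ℕ),
      top + Finsupp.single v1 t = u + Finsupp.single v0 t ∧
      t ≤ u v1 ∧ ∃ d ∈ edgeSums G k, d ≤ top + Finsupp.single v0 1 := by
  classical
  intro b
  induction b with
  | zero =>
      intro u hu hub
      by_cases hP : ∃ d ∈ edgeSums G k, d ≤ u + Finsupp.single v0 1
      · exact ⟨0, u, by simp, Nat.zero_le _, hP⟩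
      · obtain ⟨h1, -, -⟩ := step K G k g v0 v1 hv H u hu hP
        omega
  | succ b ih =>
      intro u hu hub
      by_cases hP : ∃ d ∈ edgeSums G k, d ≤ u + Finsupp.single v0 1
      · exact ⟨0, u, by simp, Nat.zero_le _, hP⟩
      · obtain ⟨h1, hu', hequ⟩ := step K G k g v0 v1 hv H u hu hP
        set u' := u + Finsupp.single v0 1 - Finsupp.single v1 1 with hu'def
        have hu'v1 : u' v1 = u v1 - 1 := by
          have h := DFunLike.congr_fun hequ v1
          simp only [Finsupp.add_apply, Finsupp.single_apply, if_true, if_neg hv] at h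
          omega
        obtain ⟨t', top, etop, ht', hPtop⟩ := ih u' hu' (by omega)
        refine ⟨t' + 1, top, ?_, by omega, hPtop⟩
        apply DFunLike.ext
        intro x
        have e1 := DFunLike.congr_fun etop x
        have e2 := DFunLike.congr_fun hequ x
        simp only [Finsupp.add_apply, Finsupp.single_apply] at e1 e2 ⊢
        by_cases hx0 : v0 = x <;> by_cases hx1 : v1 = x <;>
          simp only [hx0, hx1, if_pos, if_neg, if_true, if_false] at e1 e2 ⊢ <;> omega



lemma key (K : Type*) [Field K] (G : SimpleGraph (Fin n)) (hac : G.IsAcyclic)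
    (v0 v1 : Fin n) (hv : v0 ≠ v1) (hadj : G.Adj v0 v1)
    (huniq : ∀ q, G.Adj v0 q → q = v1) (k : ℕ) (g : MvPolynomial (Fin n) K)
    (h : (MvPolynomial.X v0 - MvPolynomial.X v1) * g ∈ (edgeIdeal K G) ^ k) :
    g ∈ (edgeIdeal K G) ^ k := by
  classical
  rw [mem_pow_iff] at h ⊢
  intro u hu
  obtain ⟨t, top, etop, ht, hPtop⟩ := up K G k g v0 v1 hv h (u v1) u hu le_rfl
  have H' : ∀ m ∈ ((MvPolynomial.X v1 - MvPolynomial.X v0) * g).support,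
      ∃ d ∈ edgeSums G k, d ≤ m := by
    intro m hm
    apply h
    have hneg : (MvPolynomial.X v1 - MvPolynomial.X v0) * g
        = -((MvPolynomial.X v0 - MvPolynomial.X v1) * g) := by ring
    rwa [hneg, MvPolynomial.support_neg] at hm
  obtain ⟨s, bot, ebot, hs, hPbot⟩ := up K G k g v1 v0 (Ne.symm hv) H' (u v0) u hu le_rfl
  obtain ⟨w, hwEq⟩ : ∃ w : Fin n →₀ ℕ,
      w + Finsupp.single v0 s + Finsupp.single v1 t = u := by
    refine ⟨u - Finsupp.single v0 s - Finsupp.single v1 t, ?_⟩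
    apply DFunLike.ext
    intro x
    simp only [Finsupp.add_apply, Finsupp.tsub_apply, Finsupp.single_apply]
    rcases eq_or_ne v0 x with hx0 | hx0
    · subst hx0
      simp only [if_pos rfl, if_true, if_neg (show ¬ v1 = v0 from fun h => hv h.symm)]
      omega
    · rcases eq_or_ne v1 x with hx1 | hx1
      · subst hx1
        simp only [if_pos rfl, if_true, if_neg (show ¬ v0 = v1 from hv)]
        omega
      · simp only [if_neg hx0, if_neg hx1]
        omega
  set m' : ℕ := s + t + 1 with hm'
  have hA : w + Finsupp.single v1 m' = bot + Finsupp.single v1 1 := by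
    apply DFunLike.ext
    intro x
    have e2 := DFunLike.congr_fun ebot x
    have ew := DFunLike.congr_fun hwEq x
    simp only [Finsupp.add_apply, Finsupp.single_apply] at e2 ew ⊢
    rcases eq_or_ne v0 x with hx0 | hx0
    · subst hx0
      simp only [if_pos rfl, if_true, if_neg (show ¬ v1 = v0 from fun h => hv h.symm)] at e2 ew ⊢
      omega
    · rcases eq_or_ne v1 x with hx1 | hx1
      · subst hx1
        simp only [if_pos rfl, if_true, if_neg (show ¬ v0 = v1 from hv)] at e2 ew ⊢
        omega
      · simp only [if_neg hx0, if_neg hx1] at e2 ew ⊢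
        omega
  have hB : w + Finsupp.single v0 m' = top + Finsupp.single v0 1 := by
    apply DFunLike.ext
    intro x
    have e1 := DFunLike.congr_fun etop x
    have ew := DFunLike.congr_fun hwEq x
    simp only [Finsupp.add_apply, Finsupp.single_apply] at e1 ew ⊢
    rcases eq_or_ne v0 x with hx0 | hx0
    · subst hx0
      simp only [if_pos rfl, if_true, if_neg (show ¬ v1 = v0 from fun h => hv h.symm)] at e1 ew ⊢
      omega
    · rcases eq_or_ne v1 x with hx1 | hx1
      · subst hx1
        simp only [if_pos rfl, if_true, if_neg (show ¬ v0 = v1 from hv)] at e1 ew ⊢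
        omega
      · simp only [if_neg hx0, if_neg hx1] at e1 ew ⊢
        omega
  -- every cover of G has w-degree at least k
  have helper : ∀ D : Finset (Fin n), IsCover G D → v0 ∉ D → k ≤ ∑ i ∈ D, w i := by
    intro D hD h0
    obtain ⟨dtop, ⟨M, hMc, hMa, hMs⟩, hdle⟩ := hPtop
    have h1 : k ≤ ∑ i ∈ D, dtop i := by
      have := cover_le_sum G hD M hMa
      rw [hMc] at this
      have husage : usageF M = dtop := hMs
      rwa [husage] at this
    have h2 : ∑ i ∈ D, dtop i ≤ ∑ i ∈ D, (w + Finsupp.single v0 m') i := by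
      apply Finset.sum_le_sum
      intro i _
      rw [hB]
      exact Finsupp.le_def.mp hdle i
    have h3 : ∑ i ∈ D, (w + Finsupp.single v0 m') i = ∑ i ∈ D, w i := by
      simp only [Finsupp.add_apply, Finset.sum_add_distrib]
      have : ∑ i ∈ D, Finsupp.single v0 m' i = 0 := by
        apply Finset.sum_eq_zero
        intro i hi
        rw [Finsupp.single_apply, if_neg]
        rintro rfl
        exact h0 hi
      omega
    omega
  have hcovw : ∀ C : Finset (Fin n), IsCover G C → k ≤ ∑ i ∈ C, w i := by
    intro C hC
    by_cases h0 : v0 ∈ C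
    · by_cases h1 : v1 ∈ C
      · -- erase v0
        have hC' : IsCover G (C.erase v0) := by
          intro i j hij
          by_cases hi : i = v0
          · subst hi
            have := huniq j hij
            subst this
            exact Or.inr (Finset.mem_erase.mpr ⟨Ne.symm hv, h1⟩)
          by_cases hj : j = v0
          · subst hj
            have := huniq i hij.symm
            subst this
            exact Or.inl (Finset.mem_erase.mpr ⟨Ne.symm hv, h1⟩)
          rcases hC i j hij with hh | hh
          · exact Or.inl (Finset.mem_erase.mpr ⟨hi, hh⟩)
          · exact Or.inr (Finset.mem_erase.mpr ⟨hj, hh⟩)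
        calc k ≤ ∑ i ∈ C.erase v0, w i :=
              helper _ hC' (Finset.notMem_erase _ _)
          _ ≤ ∑ i ∈ C, w i :=
              Finset.sum_le_sum_of_subset (Finset.erase_subset _ _)
      · -- v0 ∈ C, v1 ∉ C : use the bottom end of the chain
        obtain ⟨dbot, ⟨M, hMc, hMa, hMs⟩, hdle⟩ := hPbot
        have hk1 : k ≤ ∑ i ∈ C, dbot i := by
          have := cover_le_sum G hC M hMa
          rw [hMc] at this
          have husage : usageF M = dbot := hMs
          rwa [husage] at this
        have h2 : ∑ i ∈ C, dbot i ≤ ∑ i ∈ C, (w + Finsupp.single v1 m') i := by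
          apply Finset.sum_le_sum
          intro i _
          rw [hA]
          exact Finsupp.le_def.mp hdle i
        have h3 : ∑ i ∈ C, (w + Finsupp.single v1 m') i = ∑ i ∈ C, w i := by
          simp only [Finsupp.add_apply, Finset.sum_add_distrib]
          have : ∑ i ∈ C, Finsupp.single v1 m' i = 0 := by
            apply Finset.sum_eq_zero
            intro i hi
            rw [Finsupp.single_apply, if_neg]
            rintro rfl
            exact h1 hi
          omega
        omega
    · exact helper _ hC h0
  -- apply the combinatorial theorem
  obtain ⟨M, hMc, hMa, hMu⟩ :=
    thmM (2 * Set.ncard {p : Fin n × Fin n | G.Adj p.1 p.2} + ∑ v, w v) G hac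
      (fun v => w v) k le_rfl hcovw
  refine ⟨usageF M, ⟨M, hMc, hMa, rfl⟩, ?_⟩
  rw [Finsupp.le_def]
  intro x
  have ew := DFunLike.congr_fun hwEq x
  simp only [Finsupp.add_apply] at ew
  have := hMu x
  omega

end S14

/-- for a tree `G` in which the first vertex is a leaf with unique
neighbor the second vertex, `x_1 - x_2` is a non-zerodivisor on `S/I_G^k` for all
`k ≥ 1`. -/
theorem stmt14 (K : Type*) [Field K] {n : ℕ} (hn : 2 ≤ n) (G : SimpleGraph (Fin n))
    (hconn : G.Connected) (hacyc : G.IsAcyclic)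
    (hleaf : G.neighborSet ⟨0, by omega⟩ = {(⟨1, by omega⟩ : Fin n)}) :
    ∀ k : ℕ, 1 ≤ k → ∀ g : MvPolynomial (Fin n) K,
      (X (⟨0, by omega⟩ : Fin n) - X (⟨1, by omega⟩ : Fin n)) * g ∈ (edgeIdeal K G) ^ k →
      g ∈ (edgeIdeal K G) ^ k := by
  intro k hk g hg
  set v0 : Fin n := ⟨0, by omega⟩
  set v1 : Fin n := ⟨1, by omega⟩
  have hv : v0 ≠ v1 := by
    intro h
    have := Fin.mk.injEq 0 (by omega : (0:ℕ) < n) 1 (by omega : (1:ℕ) < n) ▸ h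
    simp [Fin.ext_iff] at h
  have hadj : G.Adj v0 v1 := by
    have : v1 ∈ G.neighborSet v0 := by rw [hleaf]; exact Set.mem_singleton _
    exact this
  have huniq : ∀ q, G.Adj v0 q → q = v1 := by
    intro q hq
    have : q ∈ G.neighborSet v0 := hq
    rw [hleaf] at this
    exact this
  exact S14.key K G hacyc v0 v1 hv hadj huniq k g hg
end
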